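/- With the notation of the mixture setting, for any two arrays F, F̃ of cdfs with probability mass functions p_{X,Z}, p̃_{X,Z} on 𝒳 × 𝒵, the aggregate discrepancy satisfies u(F, F̃) ≤ ∑_{z∈𝒵} p_Z(z) u_z(F, F̃) + ‖p_Z − p̃_Z‖₁ ≤ max_{z∈𝒵} u_z(F, F̃) + ‖p_Z − p̃_Z‖₁, where u_z(F, F̃) = ∑_{x∈𝒳} max_{i=1}^K ‖p_{X|Z=z}(x) F^i(·|x,z) − p̃_{X|Z=z}(x) F̃^i(·|x,z)‖_∞. -/

import Mathlib

/-- `F` is a cdf supported on `[a,b]`. -/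
def IsCdfOn (a b : ℝ) (F : ℝ → ℝ) : Prop :=
  Monotone F ∧ (∀ y, y < a → F y = 0) ∧ (∀ y, b ≤ y → F y = 1) ∧
    (∀ y, 0 ≤ F y ∧ F y ≤ 1)

/-- Aggregate discrepancy `u(F,F̃) = ∑_x max_i ‖p_X(x)F^i(·|x) − p̃_X(x)F̃^i(·|x)‖_∞`. -/
noncomputable def uDisc {X Z : Type} [Fintype X] [Fintype Z] (K : ℕ)
    (F Ft : Fin K → X → Z → ℝ → ℝ) (p pt : X → Z → ℝ) : ℝ :=
  ∑ x, ⨆ i : Fin K, ⨆ y : ℝ,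
    |(∑ z, p x z * F i x z y) - ∑ z, pt x z * Ft i x z y|

/-- Subgroup discrepancy
`u_z(F,F̃) = ∑_x max_i ‖p_{X|Z=z}(x)F^i(·|x,z) − p̃_{X|Z=z}(x)F̃^i(·|x,z)‖_∞`. -/
noncomputable def uzDisc {X Z : Type} [Fintype X] [Fintype Z] (K : ℕ)
    (F Ft : Fin K → X → Z → ℝ → ℝ) (p pt : X → Z → ℝ) (z : Z) : ℝ :=
  ∑ x, ⨆ i : Fin K, ⨆ y : ℝ,
    |(p x z / ∑ x', p x' z) * F i x z y - (pt x z / ∑ x', pt x' z) * Ft i x z y|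

lemma decomp_eq (s t af bg : ℝ) (hs : s ≠ 0) (ht : t ≠ 0) :
    af - bg = s * (af / s - bg / t) + (s - t) * bg / t := by
  field_simp
  ring

lemma abs_mix_le (A B f g : ℝ) (hA : 0 ≤ A) (hB : 0 ≤ B)
    (hf0 : 0 ≤ f) (hf1 : f ≤ 1) (hg0 : 0 ≤ g) (hg1 : g ≤ 1) :
    |A * f - B * g| ≤ A + B :=
  abs_le.mpr ⟨by nlinarith, by nlinarith⟩

/-- `u(F,F̃) ≤ ∑_z p_Z(z) u_z(F,F̃) + ‖p_Z − p̃_Z‖₁ ≤ max_z u_z(F,F̃) + ‖p_Z − p̃_Z‖₁`. -/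
theorem stmt_7 {X Z : Type} [Fintype X] [Nonempty X] [Fintype Z] [Nonempty Z]
    (K : ℕ) (hK : 2 ≤ K) (a b : ℝ)
    (F Ft : Fin K → X → Z → ℝ → ℝ)
    (hF : ∀ i x z, IsCdfOn a b (F i x z)) (hFt : ∀ i x z, IsCdfOn a b (Ft i x z))
    (p pt : X → Z → ℝ)
    (hp : ∀ x z, 0 ≤ p x z) (hpt : ∀ x z, 0 ≤ pt x z)
    (hps : ∑ x, ∑ z, p x z = 1) (hpts : ∑ x, ∑ z, pt x z = 1)
    (hpZ : ∀ z, 0 < ∑ x, p x z) (hptZ : ∀ z, 0 < ∑ x, pt x z) :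
    uDisc K F Ft p pt
        ≤ (∑ z, (∑ x, p x z) * uzDisc K F Ft p pt z) +
            ∑ z, |(∑ x, p x z) - ∑ x, pt x z| ∧
      (∑ z, (∑ x, p x z) * uzDisc K F Ft p pt z) +
            ∑ z, |(∑ x, p x z) - ∑ x, pt x z|
        ≤ (⨆ z : Z, uzDisc K F Ft p pt z) +
            ∑ z, |(∑ x, p x z) - ∑ x, pt x z| := by
  have hKne : Nonempty (Fin K) := ⟨⟨0, by omega⟩⟩
  have hA0 : ∀ x z, (0:ℝ) ≤ p x z / ∑ x', p x' z :=
    fun x z => div_nonneg (hp x z) (hpZ z).le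
  have hB0 : ∀ x z, (0:ℝ) ≤ pt x z / ∑ x', pt x' z :=
    fun x z => div_nonneg (hpt x z) (hptZ z).le
  -- bounds on the inner sup over y
  have hbdd_y : ∀ x z (i : Fin K), BddAbove (Set.range fun y =>
      |(p x z / ∑ x', p x' z) * F i x z y - (pt x z / ∑ x', pt x' z) * Ft i x z y|) := by
    intro x z i
    refine ⟨(p x z / ∑ x', p x' z) + (pt x z / ∑ x', pt x' z), ?_⟩
    rintro _ ⟨y, rfl⟩
    exact abs_mix_le _ _ _ _ (hA0 x z) (hB0 x z)
      ((hF i x z).2.2.2 y).1 ((hF i x z).2.2.2 y).2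
      ((hFt i x z).2.2.2 y).1 ((hFt i x z).2.2.2 y).2
  have hbdd_i : ∀ x z, BddAbove (Set.range fun i : Fin K => ⨆ y,
      |(p x z / ∑ x', p x' z) * F i x z y - (pt x z / ∑ x', pt x' z) * Ft i x z y|) :=
    fun x z => Set.Finite.bddAbove (Set.finite_range _)
  -- subgroup sup
  have h_le_T : ∀ x z (i : Fin K) (y : ℝ),
      |(p x z / ∑ x', p x' z) * F i x z y - (pt x z / ∑ x', pt x' z) * Ft i x z y|
        ≤ ⨆ i : Fin K, ⨆ y : ℝ,
          |(p x z / ∑ x', p x' z) * F i x z y - (pt x z / ∑ x', pt x' z) * Ft i x z y| :=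
    fun x z i y => (le_ciSup (hbdd_y x z i) y).trans (le_ciSup (hbdd_i x z) i)
  -- key pointwise bound
  have key : ∀ x, (⨆ i : Fin K, ⨆ y : ℝ,
      |(∑ z, p x z * F i x z y) - ∑ z, pt x z * Ft i x z y|)
      ≤ (∑ z, (∑ x', p x' z) * (⨆ i : Fin K, ⨆ y : ℝ,
          |(p x z / ∑ x', p x' z) * F i x z y - (pt x z / ∑ x', pt x' z) * Ft i x z y|))
        + ∑ z, |(∑ x', p x' z) - ∑ x', pt x' z| * (pt x z / ∑ x', pt x' z) := by
    intro x
    refine ciSup_le fun i => ciSup_le fun y => ?_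
    have eq1 : (∑ z, p x z * F i x z y) - ∑ z, pt x z * Ft i x z y
        = ∑ z, ((∑ x', p x' z) *
            ((p x z / ∑ x', p x' z) * F i x z y - (pt x z / ∑ x', pt x' z) * Ft i x z y)
          + ((∑ x', p x' z) - ∑ x', pt x' z) * ((pt x z / ∑ x', pt x' z) * Ft i x z y)) := by
      rw [← Finset.sum_sub_distrib]
      refine Finset.sum_congr rfl fun z _ => ?_
      simp only [div_mul_eq_mul_div, ← mul_div_assoc]
      exact decomp_eq _ _ _ _ (hpZ z).ne' (hptZ z).ne'
    rw [eq1]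
    calc |∑ z, ((∑ x', p x' z) *
            ((p x z / ∑ x', p x' z) * F i x z y - (pt x z / ∑ x', pt x' z) * Ft i x z y)
          + ((∑ x', p x' z) - ∑ x', pt x' z) * ((pt x z / ∑ x', pt x' z) * Ft i x z y))|
        ≤ ∑ z, |(∑ x', p x' z) *
            ((p x z / ∑ x', p x' z) * F i x z y - (pt x z / ∑ x', pt x' z) * Ft i x z y)
          + ((∑ x', p x' z) - ∑ x', pt x' z) * ((pt x z / ∑ x', pt x' z) * Ft i x z y)| :=
          Finset.abs_sum_le_sum_abs _ _
      _ ≤ ∑ z, ((∑ x', p x' z) * (⨆ i : Fin K, ⨆ y : ℝ,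
            |(p x z / ∑ x', p x' z) * F i x z y - (pt x z / ∑ x', pt x' z) * Ft i x z y|)
          + |(∑ x', p x' z) - ∑ x', pt x' z| * (pt x z / ∑ x', pt x' z)) := by
          refine Finset.sum_le_sum fun z _ => ?_
          refine (abs_add_le _ _).trans (add_le_add ?_ ?_)
          · rw [abs_mul, abs_of_pos (hpZ z)]
            exact mul_le_mul_of_nonneg_left (h_le_T x z i y) (hpZ z).le
          · rw [abs_mul]
            refine mul_le_mul_of_nonneg_left ?_ (abs_nonneg _)
            rw [abs_mul, abs_of_nonneg (hB0 x z), abs_of_nonneg ((hFt i x z).2.2.2 y).1]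
            exact mul_le_of_le_one_right (hB0 x z) ((hFt i x z).2.2.2 y).2
      _ = _ := Finset.sum_add_distrib
  constructor
  · -- first inequality
    have h1 : uDisc K F Ft p pt
        ≤ ∑ x, ((∑ z, (∑ x', p x' z) * (⨆ i : Fin K, ⨆ y : ℝ,
            |(p x z / ∑ x', p x' z) * F i x z y - (pt x z / ∑ x', pt x' z) * Ft i x z y|))
          + ∑ z, |(∑ x', p x' z) - ∑ x', pt x' z| * (pt x z / ∑ x', pt x' z)) :=
      Finset.sum_le_sum fun x _ => key x
    refine h1.trans (le_of_eq ?_)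
    rw [Finset.sum_add_distrib]
    congr 1
    · rw [Finset.sum_comm]
      refine Finset.sum_congr rfl fun z _ => ?_
      rw [uzDisc, Finset.mul_sum]
    · rw [Finset.sum_comm]
      refine Finset.sum_congr rfl fun z _ => ?_
      rw [← Finset.mul_sum, ← Finset.sum_div, div_self (hptZ z).ne', mul_one]
  · -- second inequality
    refine add_le_add_left ?_ _
    have hbddZ : BddAbove (Set.range fun z : Z => uzDisc K F Ft p pt z) :=
      Set.Finite.bddAbove (Set.finite_range _)
    have hsum1 : ∑ z, ∑ x, p x z = 1 := by rw [Finset.sum_comm]; exact hps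
    calc ∑ z, (∑ x, p x z) * uzDisc K F Ft p pt z
        ≤ ∑ z, (∑ x, p x z) * (⨆ z : Z, uzDisc K F Ft p pt z) :=
          Finset.sum_le_sum fun z _ =>
            mul_le_mul_of_nonneg_left (le_ciSup hbddZ z) (hpZ z).le
      _ = (∑ z, ∑ x, p x z) * (⨆ z : Z, uzDisc K F Ft p pt z) := by
          rw [Finset.sum_mul]
      _ = _ := by rw [hsum1, one_mul]
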